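/- Let T and J be positive integers and let x : {1,...,J} × {1,...,T} → ℝ≥0 satisfy ∑_{j=1}^{J} x_j(t) ≤ 1 for every time slot t (unit machine capacity) and ∑_{t=1}^{T} x_j(t) = d_j for every job j, where d_j ≥ 0. For each job j let C_j = max { t : x_j(t) > 0 } be its completion time. If the jobs are ordered l_1, l_2, ..., l_J so that C_{l_1} ≤ C_{l_2} ≤ ... ≤ C_{l_J}, then for every k ∈ {1,...,J}: ∑_{r=1}^{k} d_{l_r} ≤ C_{l_k}. -/
import Mathlib


open Finset

/-- The key combinatorial lemma in the hardness proof: given a fractional,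
possibly preemptive schedule `x` of jobs `1, ..., J` on a unit-capacity machine
over time slots `1, ..., T`, with demands `d j` and fractional completion times
`C j = max {t : x j t > 0}`, if the jobs are ordered `l 1, ..., l J` by
non-decreasing completion time, then the total demand of the first `k` jobs in
this order is at most `C (l k)`. -/
theorem fractional_schedule_prefix_demand_bound
    (T J : ℕ) (hT : 0 < T) (hJ : 0 < J)
    (x : ℕ → ℕ → ℝ) (d : ℕ → ℝ) (C : ℕ → ℕ) (l : ℕ → ℕ)
    (hx0 : ∀ j ∈ Finset.Icc 1 J, ∀ t ∈ Finset.Icc 1 T, 0 ≤ x j t)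
    (hcap : ∀ t ∈ Finset.Icc 1 T, ∑ j ∈ Finset.Icc 1 J, x j t ≤ 1)
    (hdem : ∀ j ∈ Finset.Icc 1 J, ∑ t ∈ Finset.Icc 1 T, x j t = d j)
    (hd0 : ∀ j ∈ Finset.Icc 1 J, 0 ≤ d j)
    (hC : ∀ j ∈ Finset.Icc 1 J,
      C j = ((Finset.Icc 1 T).filter (fun t => 0 < x j t)).sup id)
    (hl : Set.BijOn l (Set.Icc 1 J) (Set.Icc 1 J))
    (hmono : ∀ r ∈ Finset.Icc 1 J, ∀ r' ∈ Finset.Icc 1 J,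
      r ≤ r' → C (l r) ≤ C (l r')) :
    ∀ k ∈ Finset.Icc 1 J, ∑ r ∈ Finset.Icc 1 k, d (l r) ≤ (C (l k) : ℝ) := by

  intro k hk
  have hk' := Finset.mem_Icc.mp hk
  have hlr : ∀ r ∈ Finset.Icc 1 k, l r ∈ Finset.Icc 1 J := by
    intro r hr
    simp only [Finset.mem_Icc] at hr ⊢
    have : l r ∈ Set.Icc 1 J := hl.mapsTo ⟨hr.1, le_trans hr.2 hk'.2⟩
    exact ⟨this.1, this.2⟩
  set S := (Finset.Icc 1 T).filter (fun t => t ≤ C (l k)) with hS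
  have hzero : ∀ r ∈ Finset.Icc 1 k, ∀ t ∈ Finset.Icc 1 T, ¬ t ≤ C (l k) → x (l r) t = 0 := by
    intro r hr t ht hgt
    by_contra hne
    have hpos : 0 < x (l r) t := lt_of_le_of_ne (hx0 _ (hlr r hr) t ht) (Ne.symm hne)
    have hmem : t ∈ (Finset.Icc 1 T).filter (fun t => 0 < x (l r) t) :=
      Finset.mem_filter.mpr ⟨ht, hpos⟩
    have h1 : t ≤ C (l r) := by
      rw [hC _ (hlr r hr)]
      exact Finset.le_sup (f := id) hmem
    have hr' := Finset.mem_Icc.mp hr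
    have h2 : C (l r) ≤ C (l k) :=
      hmono r (Finset.mem_Icc.mpr ⟨hr'.1, le_trans hr'.2 hk'.2⟩) k hk hr'.2
    exact hgt (le_trans h1 h2)
  have hdS : ∀ r ∈ Finset.Icc 1 k, d (l r) = ∑ t ∈ S, x (l r) t := by
    intro r hr
    rw [← hdem _ (hlr r hr), hS]
    rw [← Finset.sum_filter_add_sum_filter_not (Finset.Icc 1 T) (fun t => t ≤ C (l k))]
    have hz : ∑ t ∈ (Finset.Icc 1 T).filter (fun t => ¬ t ≤ C (l k)), x (l r) t = 0 := by
      apply Finset.sum_eq_zero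
      intro t ht
      have := Finset.mem_filter.mp ht
      exact hzero r hr t this.1 this.2
    rw [hz, add_zero]
  have hinj : ∀ a ∈ Finset.Icc 1 k, ∀ b ∈ Finset.Icc 1 k, l a = l b → a = b := by
    intro a ha b hb hab
    have ha' := Finset.mem_Icc.mp ha
    have hb' := Finset.mem_Icc.mp hb
    exact hl.injOn ⟨ha'.1, le_trans ha'.2 hk'.2⟩ ⟨hb'.1, le_trans hb'.2 hk'.2⟩ hab
  calc ∑ r ∈ Finset.Icc 1 k, d (l r) = ∑ r ∈ Finset.Icc 1 k, ∑ t ∈ S, x (l r) t :=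
        Finset.sum_congr rfl hdS
    _ = ∑ t ∈ S, ∑ r ∈ Finset.Icc 1 k, x (l r) t := Finset.sum_comm
    _ ≤ ∑ t ∈ S, (1:ℝ) := by
        apply Finset.sum_le_sum
        intro t ht
        have htT : t ∈ Finset.Icc 1 T := (Finset.mem_filter.mp ht).1
        calc ∑ r ∈ Finset.Icc 1 k, x (l r) t
            = ∑ j ∈ (Finset.Icc 1 k).image l, x j t := (Finset.sum_image (f := fun j => x j t) hinj).symm
          _ ≤ ∑ j ∈ Finset.Icc 1 J, x j t := by
              apply Finset.sum_le_sum_of_subset_of_nonneg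
              · intro j hj
                obtain ⟨r, hr, rfl⟩ := Finset.mem_image.mp hj
                exact hlr r hr
              · intro j hj _
                exact hx0 j hj t htT
          _ ≤ 1 := hcap t htT
    _ = (S.card : ℝ) := by simp
    _ ≤ (C (l k) : ℝ) := by
        have hsub : S ⊆ Finset.Icc 1 (C (l k)) := by
          intro t ht
          have := Finset.mem_filter.mp ht
          exact Finset.mem_Icc.mpr ⟨(Finset.mem_Icc.mp this.1).1, this.2⟩
        have hcard := Finset.card_le_card hsub
        have : S.card ≤ C (l k) := by simpa using hcard
        exact_mod_cast this
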